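/- Let (a_1, b_1), …, (a_k, b_k) be pairwise distinct pairs with a_i ∈ ℕ and b_i ∈ ℚ, let q ≥ 2 be a real number and let c_1, …, c_k ∈ ℂ. Define h : ℕ → ℂ by h(λ) = ∑_{i=1}^k c_i · λ^{a_i} · q^{b_i·λ}. Then the limit lim_{λ→∞} h(λ) exists in ℂ if and only if c_i = 0 for every index i such that either b_i > 0, or b_i = 0 and a_i > 0; and in that case the limit equals ∑_{i : (a_i,b_i) = (0,0)} c_i (which is 0 if no pair equals (0,0)). -/

import Mathlib

open Filter Real Topology

private lemma aux_exp_grow {q : ℝ} (hq : 1 < q) {e : ℝ} (he : 0 < e) :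
    Tendsto (fun l : ℕ => q ^ (e * (l : ℝ))) atTop atTop := by
  have hq0 : 0 < q := lt_trans one_pos hq
  have h2 : Tendsto (fun l : ℕ => Real.log q * (e * (l : ℝ))) atTop atTop :=
    Tendsto.const_mul_atTop (Real.log_pos hq)
      (Tendsto.const_mul_atTop he tendsto_natCast_atTop_atTop)
  have := Real.tendsto_exp_atTop.comp h2
  refine this.congr fun l => ?_
  simp [Function.comp, Real.rpow_def_of_pos hq0]

private lemma aux_decay {q : ℝ} (hq : 1 < q) (n : ℕ) {e : ℝ} (he : e < 0) :
    Tendsto (fun l : ℕ => (l : ℝ) ^ n * q ^ (e * (l : ℝ))) atTop (𝓝 0) := by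
  have hq0 : 0 < q := lt_trans one_pos hq
  set cst : ℝ := (-e) * Real.log q with hcst
  have hc : 0 < cst := mul_pos (neg_pos.2 he) (Real.log_pos hq)
  have h2 : Tendsto (fun x : ℝ => cst * x) atTop atTop :=
    Tendsto.const_mul_atTop hc tendsto_id
  have h3 := (Real.tendsto_pow_mul_exp_neg_atTop_nhds_zero n).comp h2
  have h4 := h3.const_mul ((cst ^ n)⁻¹)
  rw [mul_zero] at h4
  have h5 : Tendsto (fun x : ℝ => x ^ n * q ^ (e * x)) atTop (𝓝 0) := by
    refine h4.congr fun x => ?_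
    have hrw : q ^ (e * x) = Real.exp (-(cst * x)) := by
      rw [Real.rpow_def_of_pos hq0]; congr 1; rw [hcst]; ring
    rw [hrw]
    simp only [Function.comp_apply, mul_pow]
    field_simp
  exact h5.comp tendsto_natCast_atTop_atTop

private lemma aux_grow {q : ℝ} (hq : 1 < q) {n : ℕ} {e : ℝ}
    (h : 0 < e ∨ (e = 0 ∧ 0 < n)) :
    Tendsto (fun l : ℕ => (l : ℝ) ^ n * q ^ (e * (l : ℝ))) atTop atTop := by
  have hq0 : 0 < q := lt_trans one_pos hq
  rcases h with he | ⟨he, hn⟩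
  · refine tendsto_atTop_mono' _ ?_ (aux_exp_grow hq he)
    filter_upwards [eventually_ge_atTop 1] with l hl
    have h1 : (1 : ℝ) ≤ (l : ℝ) ^ n := one_le_pow₀ (by exact_mod_cast hl)
    have h2 : 0 < q ^ (e * (l : ℝ)) := Real.rpow_pos_of_pos hq0 _
    nlinarith
  · subst he
    simp only [zero_mul, Real.rpow_zero, mul_one]
    exact (tendsto_pow_atTop hn.ne').comp tendsto_natCast_atTop_atTop

private lemma aux_ratio {q : ℝ} (hq : 1 < q) {m n : ℕ} {e f : ℝ}
    (h : e < f ∨ (e = f ∧ m < n)) :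
    Tendsto (fun l : ℕ => ((l : ℝ) ^ m * q ^ (e * (l : ℝ))) / ((l : ℝ) ^ n * q ^ (f * (l : ℝ))))
      atTop (𝓝 0) := by
  have hq0 : 0 < q := lt_trans one_pos hq
  rcases h with hef | ⟨hef, hmn⟩
  · refine squeeze_zero' ?_ ?_ (aux_decay hq m (e := e - f) (by linarith))
    · filter_upwards with l
      positivity
    · filter_upwards [eventually_ge_atTop 1] with l hl
      have hl1 : (1 : ℝ) ≤ (l : ℝ) := by exact_mod_cast hl
      have hpow : (1 : ℝ) ≤ (l : ℝ) ^ n := one_le_pow₀ hl1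
      have hQ : 0 < q ^ (f * (l : ℝ)) := Real.rpow_pos_of_pos hq0 _
      have hsub : q ^ ((e - f) * (l : ℝ)) = q ^ (e * (l : ℝ)) / q ^ (f * (l : ℝ)) := by
        rw [← Real.rpow_sub hq0]; ring_nf
      calc ((l : ℝ) ^ m * q ^ (e * (l : ℝ))) / ((l : ℝ) ^ n * q ^ (f * (l : ℝ)))
          ≤ ((l : ℝ) ^ m * q ^ (e * (l : ℝ))) / (1 * q ^ (f * (l : ℝ))) := by
            apply div_le_div_of_nonneg_left (by positivity) (by positivity)
            nlinarith
        _ = (l : ℝ) ^ m * q ^ ((e - f) * (l : ℝ)) := by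
            rw [hsub, one_mul]; ring
  · subst hef
    have htend : Tendsto (fun l : ℕ => ((l : ℝ))⁻¹) atTop (𝓝 0) :=
      tendsto_inv_atTop_zero.comp tendsto_natCast_atTop_atTop
    refine squeeze_zero' ?_ ?_ htend
    · filter_upwards with l
      positivity
    · filter_upwards [eventually_ge_atTop 1] with l hl
      have hl1 : (1 : ℝ) ≤ (l : ℝ) := by exact_mod_cast hl
      have hl0 : (0 : ℝ) < (l : ℝ) := by linarith
      have hQ : q ^ (e * (l : ℝ)) ≠ 0 := (Real.rpow_pos_of_pos hq0 _).ne'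
      rw [mul_div_mul_right _ _ hQ]
      have h1 : (l : ℝ) ^ n = (l : ℝ) ^ m * (l : ℝ) ^ (n - m) := by
        rw [← pow_add]; congr 1; omega
      rw [h1, div_mul_eq_div_div, div_self (pow_ne_zero m hl0.ne'), one_div]
      have h2 : (l : ℝ) ≤ (l : ℝ) ^ (n - m) := le_self_pow₀ hl1 (by omega)
      exact inv_anti₀ hl0 h2
theorem stmt_10 (k : ℕ) (a : Fin k → ℕ) (b : Fin k → ℚ)
    (hdist : Function.Injective fun i => (a i, b i))
    (q : ℝ) (hq : 2 ≤ q) (c : Fin k → ℂ) :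
    ((∃ L : ℂ, Filter.Tendsto
        (fun l : ℕ => ∑ i, c i * (l : ℂ) ^ (a i) * ((q ^ ((b i : ℝ) * (l : ℝ)) : ℝ) : ℂ))
        Filter.atTop (nhds L)) ↔
      ∀ i, (0 < b i ∨ (b i = 0 ∧ 0 < a i)) → c i = 0) ∧
    ((∀ i, (0 < b i ∨ (b i = 0 ∧ 0 < a i)) → c i = 0) →
      Filter.Tendsto
        (fun l : ℕ => ∑ i, c i * (l : ℂ) ^ (a i) * ((q ^ ((b i : ℝ) * (l : ℝ)) : ℝ) : ℂ))
        Filter.atTop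
        (nhds (∑ i ∈ Finset.univ.filter (fun i => a i = 0 ∧ b i = 0), c i))) := by
  have hq1 : (1 : ℝ) < q := by linarith
  have hq0 : (0 : ℝ) < q := by linarith
  -- norm of a term
  have hnorm : ∀ (z : ℂ) (m : ℕ) (x : ℝ) (l : ℕ), 0 < x →
      ‖z * (l : ℂ) ^ m * ((x : ℝ) : ℂ)‖ = ‖z‖ * ((l : ℝ) ^ m * x) := by
    intro z m x l hx
    rw [norm_mul, norm_mul, norm_pow, Complex.norm_natCast, Complex.norm_real,
      Real.norm_eq_abs, abs_of_pos hx, mul_assoc]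
  -- Part 2 : the sufficiency / value of the limit
  have main2 : (∀ i, (0 < b i ∨ (b i = 0 ∧ 0 < a i)) → c i = 0) →
      Filter.Tendsto
        (fun l : ℕ => ∑ i, c i * (l : ℂ) ^ (a i) * ((q ^ ((b i : ℝ) * (l : ℝ)) : ℝ) : ℂ))
        Filter.atTop
        (nhds (∑ i ∈ Finset.univ.filter (fun i => a i = 0 ∧ b i = 0), c i)) := by
    intro hc
    rw [Finset.sum_filter]
    refine tendsto_finset_sum _ fun i _ => ?_
    by_cases h0 : a i = 0 ∧ b i = 0
    · rw [if_pos h0]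
      have : (fun l : ℕ => c i * (l : ℂ) ^ (a i) * ((q ^ ((b i : ℝ) * (l : ℝ)) : ℝ) : ℂ))
          = fun _ : ℕ => c i := by
        funext l
        rw [h0.1, h0.2]
        push_cast
        rw [zero_mul, Real.rpow_zero]
        push_cast
        ring
      rw [this]
      exact tendsto_const_nhds
    · rw [if_neg h0]
      by_cases hci : c i = 0
      · simp only [hci, zero_mul]
        exact tendsto_const_nhds
      · have hng := mt (hc i) hci
        push_neg at hng
        obtain ⟨hb1, hb2⟩ := hng
        have hbne : b i ≠ 0 := by
          intro hb0
          exact h0 ⟨Nat.le_zero.mp (hb2 hb0), hb0⟩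
        have hbi : ((b i : ℝ)) < 0 := by
          have : b i < 0 := lt_of_le_of_ne hb1 hbne
          exact_mod_cast this
        have hdec := (aux_decay hq1 (a i) hbi).const_mul ‖c i‖
        rw [mul_zero] at hdec
        refine squeeze_zero_norm' ?_ hdec
        filter_upwards with l
        rw [hnorm _ _ _ _ (Real.rpow_pos_of_pos hq0 _)]
  refine ⟨⟨?_, fun hc => ⟨_, main2 hc⟩⟩, main2⟩
  rintro ⟨L, hL⟩
  by_contra hcon
  push_neg at hcon
  obtain ⟨j, hgj, hcj⟩ := hcon
  set S := Finset.univ.filter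
    (fun i => c i ≠ 0 ∧ (0 < b i ∨ (b i = 0 ∧ 0 < a i))) with hSdef
  have hSne : S.Nonempty := ⟨j, by simp [hSdef, hcj, hgj]⟩
  obtain ⟨i₀, hi₀S, hmax⟩ :=
    Finset.exists_max_image S (fun i => toLex (b i, a i)) hSne
  rw [hSdef, Finset.mem_filter] at hi₀S
  obtain ⟨-, hc0, hg0⟩ := hi₀S
  -- strict lexicographic domination
  have hlt : ∀ i, c i ≠ 0 → i ≠ i₀ → (b i < b i₀ ∨ (b i = b i₀ ∧ a i < a i₀)) := by
    intro i hci hii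
    by_cases hg : 0 < b i ∨ (b i = 0 ∧ 0 < a i)
    · have hiS : i ∈ S := by
        rw [hSdef, Finset.mem_filter]
        exact ⟨Finset.mem_univ i, hci, hg⟩
      have hle := hmax i hiS
      have hne : toLex (b i, a i) ≠ toLex (b i₀, a i₀) := by
        intro h
        apply hii
        apply hdist
        have h' : (b i, a i) = (b i₀, a i₀) := h
        simp only [Prod.mk.injEq] at h' ⊢
        exact ⟨h'.2, h'.1⟩
      have hlt' := lt_of_le_of_ne hle hne
      rwa [Prod.Lex.lt_iff] at hlt'
    · push_neg at hg
      obtain ⟨hb1, hb2⟩ := hg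
      rcases hg0 with hp | ⟨hz, hn⟩
      · exact Or.inl (lt_of_le_of_lt hb1 hp)
      · rcases lt_or_eq_of_le hb1 with hlt0 | heq0
        · exact Or.inl (by rw [hz]; exact hlt0)
        · exact Or.inr ⟨heq0.trans hz.symm, by
            have := hb2 heq0
            omega⟩
  set D : ℕ → ℂ := fun l => (l : ℂ) ^ (a i₀) * ((q ^ ((b i₀ : ℝ) * (l : ℝ)) : ℝ) : ℂ) with hD
  have hDnorm : ∀ l : ℕ, ‖D l‖ = (l : ℝ) ^ (a i₀) * q ^ ((b i₀ : ℝ) * (l : ℝ)) := by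
    intro l
    rw [hD]
    rw [norm_mul, norm_pow, Complex.norm_natCast, Complex.norm_real, Real.norm_eq_abs,
      abs_of_pos (Real.rpow_pos_of_pos hq0 _)]
  have hgrow : Filter.Tendsto (fun l => ‖D l‖) Filter.atTop Filter.atTop := by
    have hcond : 0 < ((b i₀ : ℝ)) ∨ ((b i₀ : ℝ) = 0 ∧ 0 < a i₀) := by
      rcases hg0 with hp | ⟨hz, hn⟩
      · exact Or.inl (by exact_mod_cast hp)
      · exact Or.inr ⟨by exact_mod_cast hz, hn⟩
    exact (aux_grow hq1 hcond).congr fun l => (hDnorm l).symm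
  have hDinv : Filter.Tendsto (fun l => (D l)⁻¹) Filter.atTop (nhds 0) := by
    rw [tendsto_zero_iff_norm_tendsto_zero]
    simpa only [norm_inv, Pi.inv_def] using hgrow.inv_tendsto_atTop
  have hDne : ∀ l : ℕ, 1 ≤ l → D l ≠ 0 := by
    intro l hl
    have hlr : (0 : ℝ) < (l : ℝ) := by exact_mod_cast hl
    have : 0 < ‖D l‖ := by
      rw [hDnorm]
      positivity
    exact norm_pos_iff.mp this
  have h1 : Filter.Tendsto
      (fun l : ℕ => (∑ i, c i * (l : ℂ) ^ (a i) * ((q ^ ((b i : ℝ) * (l : ℝ)) : ℝ) : ℂ))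
        * (D l)⁻¹) Filter.atTop (nhds 0) := by
    simpa using hL.mul hDinv
  have h2 : Filter.Tendsto
      (fun l : ℕ => (∑ i, c i * (l : ℂ) ^ (a i) * ((q ^ ((b i : ℝ) * (l : ℝ)) : ℝ) : ℂ))
        * (D l)⁻¹) Filter.atTop (nhds (c i₀)) := by
    have hrw : (c i₀) = ∑ i : Fin k, (if i = i₀ then c i₀ else 0) := by simp
    rw [hrw]
    have := tendsto_finset_sum (Finset.univ : Finset (Fin k))
      (f := fun i (l : ℕ) => c i * (l : ℂ) ^ (a i) * ((q ^ ((b i : ℝ) * (l : ℝ)) : ℝ) : ℂ)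
        * (D l)⁻¹)
      (x := Filter.atTop)
      (a := fun i => if i = i₀ then c i₀ else 0) ?_
    · refine this.congr fun l => ?_
      rw [← Finset.sum_mul]
    · intro i _
      by_cases hii : i = i₀
      · subst hii
        rw [if_pos rfl]
        refine Filter.Tendsto.congr' ?_ tendsto_const_nhds
        filter_upwards [Filter.eventually_ge_atTop 1] with l hl
        have : c i * (l : ℂ) ^ (a i) * ((q ^ ((b i : ℝ) * (l : ℝ)) : ℝ) : ℂ) = c i * D l := by
          rw [hD]; ring
        rw [this, mul_assoc, mul_inv_cancel₀ (hDne l hl), mul_one]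
      · rw [if_neg hii]
        by_cases hci : c i = 0
        · simp only [hci, zero_mul]
          exact tendsto_const_nhds
        · have hcase := hlt i hci hii
          have hcaseR : ((b i : ℝ)) < ((b i₀ : ℝ)) ∨
              (((b i : ℝ)) = ((b i₀ : ℝ)) ∧ a i < a i₀) := by
            rcases hcase with h | ⟨h, h'⟩
            · exact Or.inl (by exact_mod_cast h)
            · exact Or.inr ⟨by exact_mod_cast h, h'⟩
          have hrat := (aux_ratio hq1 hcaseR).const_mul ‖c i‖
          rw [mul_zero] at hrat
          refine squeeze_zero_norm' ?_ hrat
          filter_upwards [Filter.eventually_ge_atTop 1] with l hl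
          rw [norm_mul, norm_inv, hnorm _ _ _ _ (Real.rpow_pos_of_pos hq0 _), hDnorm,
            mul_assoc, ← div_eq_mul_inv]
  have : (0 : ℂ) = c i₀ := tendsto_nhds_unique h1 h2
  exact hc0 this.symm
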